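/- For nonnegative integers i ≥ 0, Σ_{k=0}^{i} S₂(i,k) b_k(x) k! = ((x+1)^{i+1} - x^{i+1})/(i+1), where S₂ are Stirling numbers of the second kind and b_k(x) are the Bernoulli polynomials of the second kind. -/

import Mathlib

open Finset PowerSeries

/-- Stirling numbers of the second kind. -/
def S2 : ℕ → ℕ → ℕ
  | 0, 0 => 1
  | 0, _ + 1 => 0
  | _ + 1, 0 => 0
  | n + 1, k + 1 => (k + 1) * S2 n (k + 1) + S2 n k

/-- The formal power series `log(1+t)/t = ∑_{n≥0} (-1)^n t^n/(n+1)`. -/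
noncomputable def logT : PowerSeries ℂ :=
  PowerSeries.mk fun n => (-1) ^ n / ((n : ℂ) + 1)

/-- The formal power series `(1+t)^x = ∑_{n≥0} x(x-1)⋯(x-n+1)/n! · t^n`. -/
noncomputable def binomSeries (x : ℂ) : PowerSeries ℂ :=
  PowerSeries.mk fun n => (∏ j ∈ Finset.range n, (x - j)) / (Nat.factorial n : ℂ)

/-- The Bernoulli polynomials of the second kind `b_m(x)`, defined by
`(t/log(1+t))(1+t)^x = ∑_{m≥0} b_m(x) t^m`. -/
noncomputable def b2 (m : ℕ) (x : ℂ) : ℂ :=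
  PowerSeries.coeff m (logT⁻¹ * binomSeries x)


noncomputable def bc (x : ℂ) (n : ℕ) : ℂ := (∏ j ∈ Finset.range n, (x - j)) / (Nat.factorial n : ℂ)

lemma bc_zero (x : ℂ) : bc x 0 = 1 := by simp [bc]

lemma bc_succ (x : ℂ) (n : ℕ) : bc x (n + 1) = bc x n * (x - n) / ((n : ℂ) + 1) := by
  have h1 : ((Nat.factorial n : ℂ)) ≠ 0 := Nat.cast_ne_zero.2 (Nat.factorial_ne_zero n)
  have h2 : ((n : ℂ) + 1) ≠ 0 := Nat.cast_add_one_ne_zero n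
  simp only [bc, Finset.prod_range_succ, Nat.factorial_succ, Nat.cast_mul, Nat.cast_add,
    Nat.cast_one]
  rw [div_mul_eq_mul_div, div_div, mul_comm ((Nat.factorial n : ℂ)) _]

lemma bc_mul (x : ℂ) (n : ℕ) : (x - n) * bc x n = ((n : ℂ) + 1) * bc x (n + 1) := by
  have h2 : ((n : ℂ) + 1) ≠ 0 := Nat.cast_add_one_ne_zero n
  rw [bc_succ]
  field_simp

lemma bc_vandermonde (a b : ℂ) : ∀ k, ∑ j ∈ Finset.range (k + 1), bc a j * bc b (k - j) = bc (a + b) k := by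
  intro k
  induction k with
  | zero => simp [bc_zero]
  | succ k ih =>
    have hk1 : ((k : ℂ) + 1) ≠ 0 := Nat.cast_add_one_ne_zero k
    apply mul_left_cancel₀ hk1
    rw [Finset.mul_sum]
    have split : ∀ j ∈ Finset.range (k + 2),
        ((k : ℂ) + 1) * (bc a j * bc b (k + 1 - j))
          = (j : ℂ) * bc a j * bc b (k + 1 - j)
            + ((k + 1 - j : ℕ) : ℂ) * (bc a j * bc b (k + 1 - j)) := by
      intro j hj
      have hj' : j ≤ k + 1 := Nat.lt_succ_iff.mp (Finset.mem_range.mp hj)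
      have : ((k + 1 - j : ℕ) : ℂ) = ((k : ℂ) + 1) - (j : ℂ) := by
        push_cast [Nat.cast_sub hj']
        ring
      rw [this]; ring
    rw [Finset.sum_congr rfl split, Finset.sum_add_distrib]
    have S1 : ∑ j ∈ Finset.range (k + 2), (j : ℂ) * bc a j * bc b (k + 1 - j)
        = ∑ j ∈ Finset.range (k + 1), (a - j) * bc a j * bc b (k - j) := by
      rw [Finset.sum_range_succ']
      simp only [Nat.cast_zero, zero_mul, add_zero, Nat.succ_sub_succ]
      apply Finset.sum_congr rfl
      intro j hj
      push_cast
      linear_combination -bc b (k - j) * bc_mul a j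
    have S2 : ∑ j ∈ Finset.range (k + 2), ((k + 1 - j : ℕ) : ℂ) * (bc a j * bc b (k + 1 - j))
        = ∑ j ∈ Finset.range (k + 1), (b - ((k - j : ℕ) : ℂ)) * (bc a j * bc b (k - j)) := by
      rw [Finset.sum_range_succ]
      simp only [Nat.sub_self, Nat.cast_zero, zero_mul, add_zero]
      apply Finset.sum_congr rfl
      intro j hj
      have hj' : j ≤ k := Nat.lt_succ_iff.mp (Finset.mem_range.mp hj)
      have h1 : k + 1 - j = (k - j) + 1 := by omega
      rw [h1]
      push_cast
      linear_combination -bc a j * bc_mul b (k - j)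
    rw [S1, S2]
    have comb : ∀ j ∈ Finset.range (k + 1),
        (a - j) * bc a j * bc b (k - j) + (b - ((k - j : ℕ) : ℂ)) * (bc a j * bc b (k - j))
          = (a + b - k) * (bc a j * bc b (k - j)) := by
      intro j hj
      have hj' : j ≤ k := Nat.lt_succ_iff.mp (Finset.mem_range.mp hj)
      have : ((k - j : ℕ) : ℂ) = (k : ℂ) - (j : ℂ) := by push_cast [Nat.cast_sub hj']; ring
      rw [this]; ring
    rw [← Finset.sum_add_distrib, Finset.sum_congr rfl comb, ← Finset.mul_sum, ih]
    exact bc_mul (a + b) k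

noncomputable def gsum (m : ℕ) (u : ℂ) : ℂ :=
  ∑ j ∈ Finset.range (m + 1), (-1) ^ j / ((j : ℂ) + 1) * bc u (m - j)

lemma gsum_succ (m : ℕ) (u : ℂ) :
    ((m : ℂ) + 2) * gsum (m + 1) u = gsum m u * (u - ((m : ℂ) + 1)) + bc u (m + 1) := by
  have hL : gsum m u * (u - ((m : ℂ) + 1)) =
      (∑ j ∈ Finset.range (m + 1),
        (-1) ^ j * (((m - j : ℕ) : ℂ) + 1) / ((j : ℂ) + 1) * bc u (m + 1 - j))
      - ∑ j ∈ Finset.range (m + 1), (-1) ^ j * bc u (m - j) := by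
    rw [gsum, Finset.sum_mul, ← Finset.sum_sub_distrib]
    apply Finset.sum_congr rfl
    intro j hj
    have hj' : j ≤ m := Nat.lt_succ_iff.mp (Finset.mem_range.mp hj)
    have h1 : m + 1 - j = (m - j) + 1 := by omega
    rw [h1]
    have hcast : ((m - j : ℕ) : ℂ) = (m : ℂ) - j := by
      push_cast [Nat.cast_sub hj']; ring
    have hb := bc_mul u (m - j)
    rw [hcast] at hb ⊢
    have hjne : ((j : ℂ) + 1) ≠ 0 := Nat.cast_add_one_ne_zero j
    linear_combination (-1 : ℂ) ^ j / ((j : ℂ) + 1) * hb - (-1 : ℂ) ^ j * bc u (m - j) * mul_inv_cancel₀ hjne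
  have hT1 : (∑ j ∈ Finset.range (m + 1),
        (-1) ^ j * (((m - j : ℕ) : ℂ) + 1) / ((j : ℂ) + 1) * bc u (m + 1 - j))
      = (∑ j ∈ Finset.range (m + 1),
          (-1) ^ (j + 1) * ((m : ℂ) - j) / ((j : ℂ) + 2) * bc u (m - j))
        + ((m : ℂ) + 1) * bc u (m + 1) := by
    rw [Finset.sum_range_succ' (fun j => (-1) ^ j * (((m - j : ℕ) : ℂ) + 1) / ((j : ℂ) + 1) * bc u (m + 1 - j)) m]
    rw [Finset.sum_range_succ (fun j => (-1) ^ (j + 1) * ((m : ℂ) - j) / ((j : ℂ) + 2) * bc u (m - j)) m]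
    simp only [sub_self, mul_zero, zero_mul, zero_div, mul_zero, zero_add]
    rw [add_zero]
    congr 1
    · apply Finset.sum_congr rfl
      intro k hk
      have hk' : k < m := Finset.mem_range.mp hk
      have e1 : m + 1 - (k + 1) = m - k := by omega
      have e2 : m - (k + 1) = m - k - 1 := by omega
      have e3 : ((m - (k + 1) : ℕ) : ℂ) + 1 = (m : ℂ) - k := by
        have : ((m - (k + 1) : ℕ) : ℂ) = (m : ℂ) - k - 1 := by
          push_cast [Nat.cast_sub (by omega : k + 1 ≤ m)]; ring
        rw [this]; ring
      rw [e1, e3]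
      push_cast
      ring
    · simp [Nat.sub_zero, Nat.add_comm]
  rw [hL, hT1, gsum, Finset.sum_range_succ' (fun j => (-1) ^ j / ((j : ℂ) + 1) * bc u (m + 1 - j)) (m + 1)]
  have key : ∀ j ∈ Finset.range (m + 1),
      ((m : ℂ) + 2) * ((-1) ^ (j + 1) / (((j + 1 : ℕ) : ℂ) + 1) * bc u (m + 1 - (j + 1)))
        = (-1) ^ (j + 1) * ((m : ℂ) - j) / ((j : ℂ) + 2) * bc u (m - j)
          - (-1) ^ j * bc u (m - j) := by
    intro j hj
    have e1 : m + 1 - (j + 1) = m - j := by omega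
    rw [e1]
    have hjne : ((j : ℂ) + 2) ≠ 0 := by
      have := Nat.cast_add_one_ne_zero (R := ℂ) (j + 1)
      push_cast at this
      convert this using 1
      ring
    push_cast
    rw [show ((j : ℂ) + 1 + 1) = (j : ℂ) + 2 by ring, div_eq_mul_inv, div_eq_mul_inv]
    linear_combination (-(-1 : ℂ) ^ j * bc u (m - j)) * mul_inv_cancel₀ hjne
  rw [mul_add, Finset.mul_sum, Finset.sum_congr rfl key, Finset.sum_sub_distrib]
  norm_num
  ring

lemma hasDerivAt_bc (m : ℕ) (u : ℂ) : HasDerivAt (fun y => bc y (m + 1)) (gsum m u) u := by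
  induction m generalizing u with
  | zero =>
    have hf : (fun y : ℂ => bc y 1) = fun y : ℂ => y := by
      funext y
      rw [bc_succ, bc_zero]
      simp
    have hg : gsum 0 u = 1 := by simp [gsum, bc_zero]
    rw [hf, hg]
    exact hasDerivAt_id u
  | succ m ih =>
    have hf : (fun y : ℂ => bc y (m + 2)) =
        fun y : ℂ => bc y (m + 1) * (y - ((m : ℂ) + 1)) / ((m : ℂ) + 2) := by
      funext y
      rw [show m + 2 = (m + 1) + 1 from rfl, bc_succ]
      push_cast
      ring
    have hd := ((ih u).mul ((hasDerivAt_id u).sub_const ((m : ℂ) + 1))).div_const ((m : ℂ) + 2)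
    have hm2 : ((m : ℂ) + 2) ≠ 0 := by
      have h2 : ((m : ℂ) + 2) = ((m + 2 : ℕ) : ℂ) := by push_cast; ring
      rw [h2]
      exact Nat.cast_ne_zero.2 (by omega)
    have hval : (gsum m u * (u - ((m : ℂ) + 1)) + bc u (m + 1) * 1) / ((m : ℂ) + 2)
        = gsum (m + 1) u := by
      rw [eq_comm, eq_div_iff hm2, mul_one, ← gsum_succ]
      ring
    rw [hf]
    rw [← hval]
    exact hd

lemma S2_eq_zero : ∀ n k, n < k → S2 n k = 0 := by
  intro n
  induction n with
  | zero => intro k hk; match k, hk with | k + 1, _ => rfl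
  | succ n ih =>
    intro k hk
    match k, hk with
    | k + 1, hk =>
      show (k + 1) * S2 n (k + 1) + S2 n k = 0
      rw [ih (k + 1) (by omega), ih k (by omega)]
      simp

lemma stirling_sum (i : ℕ) (y : ℂ) :
    ∑ k ∈ Finset.range (i + 1), (S2 i k : ℂ) * (Nat.factorial k : ℂ) * bc y k = y ^ i := by
  induction i generalizing y with
  | zero => simp [S2, bc_zero]
  | succ i ih =>
    rw [Finset.sum_range_succ'
      (fun k => (S2 (i + 1) k : ℂ) * (Nat.factorial k : ℂ) * bc y k) (i + 1)]
    have h0 : (S2 (i + 1) 0 : ℂ) = 0 := by norm_num [S2]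
    rw [h0]
    simp only [zero_mul, add_zero]
    have step : ∀ k ∈ Finset.range (i + 1),
        (S2 (i + 1) (k + 1) : ℂ) * (Nat.factorial (k + 1) : ℂ) * bc y (k + 1)
          = ((k : ℂ) + 1) * ((S2 i (k + 1) : ℂ) * (Nat.factorial (k + 1) : ℂ) * bc y (k + 1))
            + (S2 i k : ℂ) * (Nat.factorial k : ℂ) * (((k : ℂ) + 1) * bc y (k + 1)) := by
      intro k hk
      have hrec : S2 (i + 1) (k + 1) = (k + 1) * S2 i (k + 1) + S2 i k := rfl
      rw [hrec, Nat.factorial_succ]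
      push_cast
      ring
    rw [Finset.sum_congr rfl step, Finset.sum_add_distrib]
    have hA : ∑ k ∈ Finset.range (i + 1),
        ((k : ℂ) + 1) * ((S2 i (k + 1) : ℂ) * (Nat.factorial (k + 1) : ℂ) * bc y (k + 1))
          = ∑ k ∈ Finset.range (i + 1), (k : ℂ) * ((S2 i k : ℂ) * (Nat.factorial k : ℂ) * bc y k) := by
      rw [Finset.sum_range_succ'
        (fun k => (k : ℂ) * ((S2 i k : ℂ) * (Nat.factorial k : ℂ) * bc y k)) i]
      rw [Finset.sum_range_succ
        (fun k => ((k : ℂ) + 1) * ((S2 i (k + 1) : ℂ) * (Nat.factorial (k + 1) : ℂ) * bc y (k + 1))) i]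
      rw [S2_eq_zero i (i + 1) (by omega)]
      push_cast
      simp
    have hB : ∀ k ∈ Finset.range (i + 1),
        (S2 i k : ℂ) * (Nat.factorial k : ℂ) * (((k : ℂ) + 1) * bc y (k + 1))
          = (S2 i k : ℂ) * (Nat.factorial k : ℂ) * ((y - (k : ℂ)) * bc y k) := by
      intro k hk
      rw [bc_mul]
    rw [hA, Finset.sum_congr rfl hB]
    have : ∑ k ∈ Finset.range (i + 1), (k : ℂ) * ((S2 i k : ℂ) * (Nat.factorial k : ℂ) * bc y k)
        + ∑ k ∈ Finset.range (i + 1),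
            (S2 i k : ℂ) * (Nat.factorial k : ℂ) * ((y - (k : ℂ)) * bc y k)
        = y * ∑ k ∈ Finset.range (i + 1), (S2 i k : ℂ) * (Nat.factorial k : ℂ) * bc y k := by
      rw [← Finset.sum_add_distrib, Finset.mul_sum]
      apply Finset.sum_congr rfl
      intro k hk
      ring
    rw [this, ih, pow_succ]
    ring

noncomputable def cInt (n : ℕ) : ℂ := ∫ u in (0:ℝ)..(1:ℝ), bc u n

lemma cont_bc (x : ℂ) (n : ℕ) : Continuous (fun u : ℝ => bc (x + u) n) := by
  unfold bc
  apply Continuous.div_const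
  exact continuous_finset_prod _ fun j _ =>
    (continuous_const.add Complex.continuous_ofReal).sub continuous_const

lemma cont_bc' (n : ℕ) : Continuous (fun u : ℝ => bc u n) := by
  have := cont_bc 0 n
  simpa using this

lemma bc_one_eq_zero (n : ℕ) : bc 1 (n + 2) = 0 := by
  unfold bc
  rw [div_eq_zero_iff]
  left
  apply Finset.prod_eq_zero (Finset.mem_range.mpr (by omega : 1 < n + 2))
  simp

lemma bc_zero_eq_zero (n : ℕ) : bc 0 (n + 1) = 0 := by
  unfold bc
  rw [div_eq_zero_iff]
  left
  apply Finset.prod_eq_zero (Finset.mem_range.mpr (by omega : 0 < n + 1))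
  simp

lemma integral_gsum (m : ℕ) :
    (∫ u in (0:ℝ)..(1:ℝ), gsum (m + 1) u) = 0 := by
  have hd : ∀ u ∈ Set.uIcc (0:ℝ) 1, HasDerivAt (fun v : ℝ => bc v (m + 2)) (gsum (m + 1) u) u :=
    fun u _ => (hasDerivAt_bc (m + 1) u).comp_ofReal
  have hcont : Continuous (fun u : ℝ => gsum (m + 1) (u : ℂ)) := by
    unfold gsum
    exact continuous_finset_sum _ fun j _ => continuous_const.mul (cont_bc' _)
  rw [intervalIntegral.integral_eq_sub_of_hasDerivAt hd (hcont.intervalIntegrable _ _)]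
  push_cast
  rw [bc_one_eq_zero, bc_zero_eq_zero]
  ring

lemma logT_inv : logT⁻¹ = PowerSeries.mk cInt := by
  have h0 : constantCoeff logT ≠ 0 := by
    rw [logT, ← coeff_zero_eq_constantCoeff_apply, coeff_mk]
    norm_num
  rw [PowerSeries.inv_eq_iff_mul_eq_one h0]
  ext n
  rw [coeff_mul, Finset.Nat.sum_antidiagonal_eq_sum_range_succ_mk]
  simp only [coeff_mk, logT]
  cases n with
  | zero =>
    simp only [Finset.range_one, Finset.sum_singleton, Nat.sub_zero, pow_zero, Nat.cast_zero]
    rw [coeff_one]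
    norm_num [cInt, bc_zero]
  | succ m =>
    rw [coeff_one]
    simp only [Nat.succ_ne_zero, if_false]
    rw [← Finset.sum_range_reflect]
    have h : ∀ j ∈ Finset.range (m + 2),
        cInt (m + 2 - 1 - j) *
            ((-1) ^ (m + 1 - (m + 2 - 1 - j)) / (((m + 1 - (m + 2 - 1 - j) : ℕ) : ℂ) + 1))
          = ∫ u in (0:ℝ)..(1:ℝ), (-1) ^ j / ((j : ℂ) + 1) * bc u (m + 1 - j) := by
      intro j hj
      have hj' : j ≤ m + 1 := by have := Finset.mem_range.mp hj; omega
      have e1 : m + 2 - 1 - j = m + 1 - j := by omega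
      have e2 : m + 1 - (m + 1 - j) = j := by omega
      rw [e1, e2, cInt, mul_comm, ← intervalIntegral.integral_const_mul]
    rw [Finset.sum_congr rfl h, ← intervalIntegral.integral_finset_sum]
    · have := integral_gsum m
      unfold gsum at this
      exact this
    · intro j hj
      exact (continuous_const.mul (cont_bc' _)).intervalIntegrable _ _

lemma b2_eq_integral (k : ℕ) (x : ℂ) :
    b2 k x = ∫ u in (0:ℝ)..(1:ℝ), bc (x + u) k := by
  rw [b2, logT_inv, coeff_mul, Finset.Nat.sum_antidiagonal_eq_sum_range_succ_mk]
  simp only [coeff_mk, binomSeries]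
  have h : ∀ j ∈ Finset.range (k + 1),
      cInt j * ((∏ r ∈ Finset.range (k - j), (x - r)) / (Nat.factorial (k - j) : ℂ))
        = ∫ u in (0:ℝ)..(1:ℝ), bc u j * bc x (k - j) := by
    intro j hj
    rw [cInt, show ((∏ r ∈ Finset.range (k - j), (x - r)) / (Nat.factorial (k - j) : ℂ)) = bc x (k - j) from rfl,
      ← intervalIntegral.integral_mul_const]
  rw [Finset.sum_congr rfl h, ← intervalIntegral.integral_finset_sum]
  · apply intervalIntegral.integral_congr
    intro u hu
    simp only
    rw [bc_vandermonde (u : ℂ) x k, add_comm]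
  · intro j hj
    exact ((cont_bc' _).mul continuous_const).intervalIntegrable _ _

theorem S2_b2_sum (i : ℕ) (x : ℂ) :
    ∑ k ∈ Finset.range (i + 1), (S2 i k : ℂ) * b2 k x * (Nat.factorial k : ℂ)
      = ((x + 1) ^ (i + 1) - x ^ (i + 1)) / ((i : ℂ) + 1) := by
  have h : ∀ k ∈ Finset.range (i + 1),
      (S2 i k : ℂ) * b2 k x * (Nat.factorial k : ℂ)
        = ∫ u in (0:ℝ)..(1:ℝ), (S2 i k : ℂ) * (Nat.factorial k : ℂ) * bc (x + u) k := by
    intro k hk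
    rw [b2_eq_integral, intervalIntegral.integral_const_mul]
    ring
  rw [Finset.sum_congr rfl h, ← intervalIntegral.integral_finset_sum]
  · have hcong : ∀ u ∈ Set.uIcc (0:ℝ) (1:ℝ),
        (∑ k ∈ Finset.range (i + 1), (S2 i k : ℂ) * (Nat.factorial k : ℂ) * bc (x + u) k)
          = (x + u) ^ i := fun u _ => stirling_sum i (x + u)
    rw [intervalIntegral.integral_congr hcong]
    have hder : ∀ u ∈ Set.uIcc (0:ℝ) (1:ℝ),
        HasDerivAt (fun v : ℝ => (x + v) ^ (i + 1) / ((i : ℂ) + 1)) ((x + u) ^ i) u := by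
      intro u _
      have h2 := (((hasDerivAt_id ((u : ℝ) : ℂ)).const_add x).pow (i + 1)).div_const ((i : ℂ) + 1)
      have hne : ((i : ℂ) + 1) ≠ 0 := Nat.cast_add_one_ne_zero i
      have h4 := h2.comp_ofReal
      simp only [id_eq, Nat.add_sub_cancel, mul_one] at h4
      convert h4 using 1
      · rfl
      push_cast
      field_simp
    rw [intervalIntegral.integral_eq_sub_of_hasDerivAt hder
      (((continuous_const.add Complex.continuous_ofReal).pow i).intervalIntegrable _ _)]
    push_cast
    rw [add_zero, div_sub_div_same]
  · intro k hk
    exact (continuous_const.mul (cont_bc x k)).intervalIntegrable _ _
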